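/- Let N = C ⋊ ⟨t⟩ be a semidirect product of a finite group C by an infinite cyclic group generated by t, and let m be the order of the automorphism of C given by conjugation by t. Then the set of (2m|C|)-th powers {n^(2m|C|) : n ∈ N} is exactly the cyclic subgroup generated by t^(2m|C|). -/
import Mathlib

section Aux

variable {C : Type*} [Group C] {φ : Multiplicative ℤ →* MulAut C}

/-- Power formula in the semidirect product. -/
lemma sdp_pow (c : C) (z : Multiplicative ℤ) (k : ℕ) :
    (⟨c, z⟩ : C ⋊[φ] Multiplicative ℤ) ^ k
      = ⟨((List.range k).map (fun i => (φ z ^ i) c)).prod, z ^ k⟩ := by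
  induction k with
  | zero => simp
  | succ k ih =>
      rw [pow_succ, ih, SemidirectProduct.mul_def]
      refine SemidirectProduct.ext ?_ ?_
      · simp [List.range_succ, ← map_pow]
      · simp [pow_succ]

lemma block_prod (σ : MulAut C) (c : C) (m j : ℕ) (h : σ ^ m = 1) :
    ((List.range (m * j)).map (fun i => (σ ^ i) c)).prod
      = (((List.range m).map (fun i => (σ ^ i) c)).prod) ^ j := by
  induction j with
  | zero => simp
  | succ j ih =>
      have hmj : m * (j + 1) = m * j + m := by ring
      have h2 : σ ^ (m * j) = 1 := by rw [pow_mul, h, one_pow]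
      rw [hmj, List.range_add, List.map_append, List.prod_append, ih, List.map_map, pow_succ]
      congr 1
      refine congrArg List.prod ?_
      simp only [Function.comp_def, pow_add, h2, one_mul]

lemma ofAdd_one_zpow (z : Multiplicative ℤ) :
    z = (Multiplicative.ofAdd (1 : ℤ)) ^ (Multiplicative.toAdd z) := by
  simp [← ofAdd_zsmul]

end Aux

/-- Let `N = C ⋊ ⟨t⟩` with `C` finite and `t` generating an infinite cyclic group, and let
`m` be the order of the conjugation automorphism `ad(t)|_C`.  Then the set of
`(2·m·|C|)`-th powers of `N` is exactly the cyclic subgroup generated by `t ^ (2·m·|C|)`. -/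
theorem stmt_1 (C : Type*) [Group C] [Finite C]
    (φ : Multiplicative ℤ →* MulAut C) :
    let t : C ⋊[φ] Multiplicative ℤ := ⟨1, Multiplicative.ofAdd (1 : ℤ)⟩
    let m : ℕ := orderOf (φ (Multiplicative.ofAdd (1 : ℤ)))
    {x : C ⋊[φ] Multiplicative ℤ |
        ∃ n : C ⋊[φ] Multiplicative ℤ, n ^ (2 * m * Nat.card C) = x}
      = (Subgroup.zpowers (t ^ (2 * m * Nat.card C)) : Set (C ⋊[φ] Multiplicative ℤ)) := by
  intro t m
  have hm : ∀ z : Multiplicative ℤ, φ z ^ m = 1 := by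
    intro z
    rw [ofAdd_one_zpow z, map_zpow, ← zpow_natCast, ← zpow_mul, mul_comm, zpow_mul, zpow_natCast,
      pow_orderOf_eq_one, one_zpow]
  have ht : t = SemidirectProduct.inr (φ := φ) (Multiplicative.ofAdd (1 : ℤ)) := by
    refine SemidirectProduct.ext ?_ ?_ <;> simp [t]
  ext x
  simp only [Set.mem_setOf_eq, SetLike.mem_coe, Subgroup.mem_zpowers_iff]
  constructor
  · rintro ⟨⟨c, z⟩, rfl⟩
    have key : ((List.range (2 * m * Nat.card C)).map (fun i => (φ z ^ i) c)).prod = 1 := by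
      have h1 : 2 * m * Nat.card C = m * (2 * Nat.card C) := by ring
      rw [h1, block_prod _ _ _ _ (hm z), mul_comm 2, pow_mul, pow_card_eq_one', one_pow]
    refine ⟨Multiplicative.toAdd z, ?_⟩
    conv_rhs => rw [sdp_pow, key]
    have hz : (SemidirectProduct.inr (φ := φ) (Multiplicative.ofAdd (1 : ℤ))
          ^ (2 * m * Nat.card C)) ^ Multiplicative.toAdd z
        = SemidirectProduct.inr (z ^ (2 * m * Nat.card C)) := by
      rw [← map_pow, ← map_zpow]
      congr 1
      rw [← zpow_natCast (Multiplicative.ofAdd (1 : ℤ)), ← zpow_mul, mul_comm, zpow_mul,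
        zpow_natCast, ← ofAdd_one_zpow z]
    rw [ht, hz]
    exact SemidirectProduct.ext (by simp [← map_pow]) (by simp [← map_pow])
  · rintro ⟨a, rfl⟩
    exact ⟨t ^ a, by rw [← zpow_natCast, ← zpow_mul, mul_comm, zpow_mul, zpow_natCast]⟩
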